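/- Let G be a closed convex subset of a real inner product space X such that εB_X ⊆ G ⊆ KB_X for some ε, K > 0. If u, w ∈ ∂G (the boundary of G) and cos(u,w) = ⟨u,w⟩/(‖u‖‖w‖) = θ > 0, then ‖u - w‖² ≤ K²(K²/ε² + 1)(1 - θ²)/θ². -/

import Mathlib

open RealInnerProductSpace

-- Supporting functional at a frontier point
lemma support_aux {X : Type*} [NormedAddCommGroup X] [InnerProductSpace ℝ X]
    (G : Set X) (hGconv : Convex ℝ G)
    (ε : ℝ) (hε : 0 < ε) (hball : Metric.closedBall (0 : X) ε ⊆ G)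
    (w : X) (hw : w ∈ frontier G) :
    ∃ f : X →L[ℝ] ℝ, (∀ x ∈ G, f x ≤ f w) ∧ 0 < f w ∧ ε * ‖f‖ ≤ f w := by
  have hwint : w ∉ interior G := hw.2
  obtain ⟨f, hf⟩ := geometric_hahn_banach_open_point (hGconv.interior) isOpen_interior hwint
  have hball' : Metric.ball (0 : X) ε ⊆ interior G :=
    interior_maximal (le_trans Metric.ball_subset_closedBall hball) Metric.isOpen_ball
  have h0 : (0 : X) ∈ interior G := hball' (Metric.mem_ball_self hε)
  have hfw : 0 < f w := by have := hf 0 h0; simpa using this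
  have hle : ∀ x ∈ G, f x ≤ f w := by
    intro x hx
    by_contra hlt
    push_neg at hlt
    have hfx : 0 < f x := lt_trans hfw hlt
    obtain ⟨t, ht1, ht2⟩ := exists_between ((div_lt_one hfx).mpr hlt)
    have ht0 : 0 ≤ t := le_trans (by positivity) ht1.le
    have hmem : (1 - t) • (0 : X) + t • x ∈ interior G :=
      hGconv.combo_interior_closure_mem_interior h0 (subset_closure hx)
        (by linarith) ht0 (by ring)
    have := hf _ hmem
    simp only [smul_zero, zero_add, map_smul] at this
    have : f w < t * f x := (div_lt_iff₀ hfx).mp ht1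
    have h2 := hf _ hmem
    simp only [smul_zero, zero_add, map_smul, smul_eq_mul] at h2
    linarith
  refine ⟨f, hle, hfw, ?_⟩
  have hnorm : ‖f‖ ≤ f w / ε := by
    apply ContinuousLinearMap.opNorm_le_bound f (by positivity)
    intro x
    rcases eq_or_ne x 0 with rfl | hx0
    · simp
    · have hxn : 0 < ‖x‖ := norm_pos_iff.mpr hx0
      have h1 : f ((ε / ‖x‖) • x) ≤ f w := by
        apply hle
        apply hball
        simp only [Metric.mem_closedBall, dist_zero_right, norm_smul, norm_neg,
          Real.norm_eq_abs, abs_of_nonneg (le_of_lt (by positivity : (0:ℝ) < ε / ‖x‖))]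
        rw [div_mul_cancel₀ _ (ne_of_gt hxn)]
      have h2 : f ((ε / ‖x‖) • (-x)) ≤ f w := by
        apply hle
        apply hball
        simp only [Metric.mem_closedBall, dist_zero_right, norm_smul, norm_neg,
          Real.norm_eq_abs, abs_of_nonneg (le_of_lt (by positivity : (0:ℝ) < ε / ‖x‖))]
        rw [div_mul_cancel₀ _ (ne_of_gt hxn)]
      simp only [map_smul, smul_eq_mul, map_neg] at h1 h2
      rw [div_mul_eq_mul_div, div_le_iff₀ hxn] at h1 h2
      rw [Real.norm_eq_abs, abs_le]
      constructor
      · rw [neg_le, div_mul_eq_mul_div, le_div_iff₀ hε]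
        nlinarith
      · rw [div_mul_eq_mul_div, le_div_iff₀ hε]
        nlinarith
  calc ε * ‖f‖ ≤ ε * (f w / ε) := by nlinarith
    _ = f w := by field_simp


lemma onesided {X : Type*} [NormedAddCommGroup X] [InnerProductSpace ℝ X]
    (G : Set X) (hGconv : Convex ℝ G)
    (ε : ℝ) (hε : 0 < ε) (hball : Metric.closedBall (0 : X) ε ⊆ G)
    (u w : X) (hu : u ∈ G) (hw : w ∈ frontier G)
    (θ : ℝ) (hθn : 0 ≤ θ) (hθ1 : θ ≤ 1) (hip : ⟪u, w⟫ = θ * ‖u‖ * ‖w‖) :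
    θ * ‖u‖ - ‖w‖ ≤ ‖u‖ * ‖w‖ * Real.sqrt (1 - θ ^ 2) / ε := by
  obtain ⟨f, hle, hfw, hεf⟩ := support_aux G hGconv ε hε hball w hw
  set a := ‖u‖ with ha
  set b := ‖w‖ with hb
  set s := Real.sqrt (1 - θ ^ 2) with hsdef
  have hs0 : 0 ≤ s := Real.sqrt_nonneg _
  have hs2 : s ^ 2 = 1 - θ ^ 2 := Real.sq_sqrt (by nlinarith)
  have ha0 : 0 ≤ a := norm_nonneg u
  have hb0 : 0 ≤ b := norm_nonneg w
  set v := b • u - (θ * a) • w with hvdef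
  have hvv : ‖v‖ ^ 2 = a ^ 2 * b ^ 2 * (1 - θ ^ 2) := by
    have h1 : ‖v‖ ^ 2 = ⟪v, v⟫ := (real_inner_self_eq_norm_sq v).symm
    have hwu : ⟪w, u⟫ = θ * a * b := by rw [real_inner_comm]; exact hip
    rw [h1, hvdef]
    simp only [inner_sub_left, inner_sub_right, real_inner_smul_left, real_inner_smul_right,
      hip, hwu]
    simp only [real_inner_self_eq_norm_sq, ← ha, ← hb]
    ring
  have heq : ‖v‖ ^ 2 = (a * b * s) ^ 2 := by
    rw [hvv]; linear_combination (-(a ^ 2 * b ^ 2)) * hs2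
  have hvle : ‖v‖ ≤ a * b * s := by
    nlinarith [norm_nonneg v, heq, mul_nonneg (mul_nonneg ha0 hb0) hs0]
  have hfv : -(f v) ≤ ‖f‖ * (a * b * s) := by
    have h := f.le_opNorm v
    have h2 : ‖f‖ * ‖v‖ ≤ ‖f‖ * (a * b * s) :=
      mul_le_mul_of_nonneg_left hvle (norm_nonneg f)
    have h3 : -(f v) ≤ ‖f v‖ := neg_le_abs (f v)
    linarith
  have hfveq : f v = b * f u - θ * a * f w := by
    rw [hvdef]; simp [map_sub, map_smul]
  have hu' : f u ≤ f w := hle u hu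
  have hfnorm : ‖f‖ * (a * b * s) ≤ f w / ε * (a * b * s) := by
    apply mul_le_mul_of_nonneg_right _ (by positivity)
    rw [le_div_iff₀ hε]
    nlinarith
  have e3 : b * f u ≤ b * f w := mul_le_mul_of_nonneg_left hu' hb0
  have h4 : (θ * a - b) * f w ≤ a * b * s / ε * f w := by
    have key : θ * a * f w ≤ b * f w + f w / ε * (a * b * s) := by
      have : θ * a * f w = b * f u - f v := by rw [hfveq]; ring
      linarith
    have : f w / ε * (a * b * s) = a * b * s / ε * f w := by ring
    nlinarith
  exact le_of_mul_le_mul_right (by linarith) hfw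
set_option maxHeartbeats 1000000 in
theorem stmt0 {X : Type*} [NormedAddCommGroup X] [InnerProductSpace ℝ X]
    (G : Set X) (hGclosed : IsClosed G) (hGconv : Convex ℝ G)
    (ε K : ℝ) (hε : 0 < ε) (hK : 0 < K)
    (hball : Metric.closedBall (0 : X) ε ⊆ G) (hGK : G ⊆ Metric.closedBall (0 : X) K)
    (u w : X) (hu : u ∈ frontier G) (hw : w ∈ frontier G)
    (θ : ℝ) (hθpos : 0 < θ) (hcos : ⟪u, w⟫ / (‖u‖ * ‖w‖) = θ) :
    ‖u - w‖ ^ 2 ≤ K ^ 2 * (K ^ 2 / ε ^ 2 + 1) * (1 - θ ^ 2) / θ ^ 2 := by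
  have huG : u ∈ G := hGclosed.frontier_subset hu
  have hwG : w ∈ G := hGclosed.frontier_subset hw
  set a := ‖u‖ with ha
  set b := ‖w‖ with hb
  have haK : a ≤ K := by
    have := hGK huG; rwa [Metric.mem_closedBall, dist_zero_right] at this
  have hbK : b ≤ K := by
    have := hGK hwG; rwa [Metric.mem_closedBall, dist_zero_right] at this
  have haε : ε ≤ a := by
    by_contra h
    push_neg at h
    have : u ∈ interior G := by
      apply interior_maximal (le_trans Metric.ball_subset_closedBall hball) Metric.isOpen_ball
      rwa [Metric.mem_ball, dist_zero_right]
    exact hu.2 this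
  have hbε : ε ≤ b := by
    by_contra h
    push_neg at h
    have : w ∈ interior G := by
      apply interior_maximal (le_trans Metric.ball_subset_closedBall hball) Metric.isOpen_ball
      rwa [Metric.mem_ball, dist_zero_right]
    exact hw.2 this
  have ha0 : 0 < a := lt_of_lt_of_le hε haε
  have hb0 : 0 < b := lt_of_lt_of_le hε hbε
  have hab : 0 < a * b := mul_pos ha0 hb0
  have hip : ⟪u, w⟫ = θ * a * b := by
    rw [div_eq_iff (ne_of_gt hab)] at hcos
    rw [hcos]; ring
  have hθ1 : θ ≤ 1 := by
    have hcs := real_inner_le_norm u w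
    rw [hip] at hcs
    nlinarith
  have hwu : ⟪w, u⟫ = θ * b * a := by rw [real_inner_comm]; rw [hip]; ring
  set s := Real.sqrt (1 - θ ^ 2) with hsdef
  have hs0 : 0 ≤ s := Real.sqrt_nonneg _
  have hs2 : s ^ 2 = 1 - θ ^ 2 := Real.sq_sqrt (by nlinarith)
  have hs1 : s ≤ 1 := by nlinarith
  have h1 := onesided G hGconv ε hε hball u w huG hw θ hθpos.le hθ1 hip
  have h2 := onesided G hGconv ε hε hball w u hwG hu θ hθpos.le hθ1 hwu
  rw [← ha, ← hb, ← hsdef] at h1 h2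
  have h1' : (θ * a - b) * ε ≤ a * b * s := by
    rw [← le_div_iff₀ hε]; exact h1
  have h2' : (θ * b - a) * ε ≤ b * a * s := by
    rw [← le_div_iff₀ hε]; exact h2
  have hD : ‖u - w‖ ^ 2 = a ^ 2 + b ^ 2 - 2 * (θ * a * b) := by
    rw [norm_sub_sq_real, hip, ← ha, ← hb]; ring
  have hεK : ε ≤ K := le_trans haε haK
  rw [hD]
  have hrhs : K ^ 2 * (K ^ 2 / ε ^ 2 + 1) * (1 - θ ^ 2) / θ ^ 2
      = K ^ 2 * (K ^ 2 + ε ^ 2) * s ^ 2 / (θ ^ 2 * ε ^ 2) := by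
    rw [hs2]
    field_simp
  rw [hrhs, le_div_iff₀ (by positivity : (0:ℝ) < θ ^ 2 * ε ^ 2)]
  clear hrhs hD h1 h2 hcos hip hwu hsdef ha hb
  clear_value a b s
  -- goal : (a^2 + b^2 - 2*(θ*a*b)) * (θ^2 * ε^2) ≤ K^2 * (K^2 + ε^2) * s^2
  have hK4 : a ^ 2 * b ^ 2 * s ^ 2 ≤ K ^ 4 * s ^ 2 := by
    have e : a * b ≤ K * K := mul_le_mul haK hbK hb0.le hK.le
    have h' : a ^ 2 * b ^ 2 ≤ K ^ 4 := by
      nlinarith [mul_le_mul e e hab.le (by positivity : (0:ℝ) ≤ K * K)]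
    nlinarith [sq_nonneg s, h']
  rcases le_total a (θ * b) with hc | hc
  · -- 0 ≤ θ*b - a ≤ b*a*s/ε
    have hnn : 0 ≤ (θ * b - a) * ε := mul_nonneg (by linarith) hε.le
    have hsq : ((θ * b - a) * ε) ^ 2 ≤ (b * a * s) ^ 2 := pow_le_pow_left₀ hnn h2' 2
    have hiden : (a ^ 2 + b ^ 2 - 2 * (θ * a * b)) * (θ ^ 2 * ε ^ 2)
        = ((θ * b - a) * ε) ^ 2 + s ^ 2 * ε ^ 2 * (2 * θ * a * b - a ^ 2) := by
      linear_combination (ε ^ 2 * (a ^ 2 - 2 * θ * a * b)) * hs2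
    have t2 : 2 * θ * a * b - a ^ 2 ≤ K ^ 2 := by nlinarith [sq_nonneg (a - b)]
    have t3 : s ^ 2 * ε ^ 2 * (2 * θ * a * b - a ^ 2) ≤ s ^ 2 * ε ^ 2 * K ^ 2 :=
      mul_le_mul_of_nonneg_left t2 (by positivity)
    nlinarith [hiden, hsq, hK4, t3]
  · rcases le_total b (θ * a) with hc2 | hc2
    · have hnn : 0 ≤ (θ * a - b) * ε := by nlinarith
      have hsq : ((θ * a - b) * ε) ^ 2 ≤ (a * b * s) ^ 2 := by
        nlinarith [h1']
      have hiden : (a ^ 2 + b ^ 2 - 2 * (θ * a * b)) * (θ ^ 2 * ε ^ 2)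
          = ((θ * a - b) * ε) ^ 2 + s ^ 2 * ε ^ 2 * (2 * θ * a * b - b ^ 2) := by
        linear_combination (ε ^ 2 * (b ^ 2 - 2 * θ * a * b)) * hs2
      have t2 : 2 * θ * a * b - b ^ 2 ≤ K ^ 2 := by nlinarith [sq_nonneg (a - b)]
      have t3 : s ^ 2 * ε ^ 2 * (2 * θ * a * b - b ^ 2) ≤ s ^ 2 * ε ^ 2 * K ^ 2 :=
        mul_le_mul_of_nonneg_left t2 (by positivity)
      nlinarith [hiden, hsq, hK4, t3]
    · -- θ*a ≤ b and θ*b ≤ a : 0 ≤ b - θ*a ≤ b*s^2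
      have hup : b - θ * a ≤ b * s ^ 2 := by
        rw [hs2]; nlinarith
      have hnn : 0 ≤ b - θ * a := by linarith
      have hsq : ((θ * a - b) * ε) ^ 2 ≤ (b * s ^ 2) ^ 2 * ε ^ 2 := by
        have h' : (b - θ * a) ^ 2 ≤ (b * s ^ 2) ^ 2 := pow_le_pow_left₀ hnn hup 2
        calc ((θ * a - b) * ε) ^ 2 = (b - θ * a) ^ 2 * ε ^ 2 := by ring
          _ ≤ (b * s ^ 2) ^ 2 * ε ^ 2 := mul_le_mul_of_nonneg_right h' (sq_nonneg ε)
      have hbig : (b * s ^ 2) ^ 2 * ε ^ 2 ≤ K ^ 4 * s ^ 2 := by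
        have e0 : b * ε ≤ K * K := mul_le_mul hbK hεK hε.le hK.le
        have e1 : b ^ 2 * ε ^ 2 ≤ K ^ 2 * K ^ 2 := by
          nlinarith [mul_le_mul e0 e0 (by positivity : (0:ℝ) ≤ b * ε) (by positivity : (0:ℝ) ≤ K * K)]
        have e2 : b ^ 2 * ε ^ 2 * s ^ 2 ≤ K ^ 2 * K ^ 2 * s ^ 2 := by
          nlinarith [sq_nonneg s, e1]
        have e3 : s ^ 2 ≤ 1 := by nlinarith
        nlinarith [e2, e3, mul_nonneg (mul_nonneg (sq_nonneg b) (sq_nonneg ε)) (sq_nonneg s)]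
      have hiden : (a ^ 2 + b ^ 2 - 2 * (θ * a * b)) * (θ ^ 2 * ε ^ 2)
          = ((θ * a - b) * ε) ^ 2 + s ^ 2 * ε ^ 2 * (2 * θ * a * b - b ^ 2) := by
        linear_combination (ε ^ 2 * (b ^ 2 - 2 * θ * a * b)) * hs2
      have t2 : 2 * θ * a * b - b ^ 2 ≤ K ^ 2 := by nlinarith [sq_nonneg (a - b)]
      have t3 : s ^ 2 * ε ^ 2 * (2 * θ * a * b - b ^ 2) ≤ s ^ 2 * ε ^ 2 * K ^ 2 :=
        mul_le_mul_of_nonneg_left t2 (by positivity)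
      nlinarith [hiden, hsq, hbig, t3]
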